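/- For every x ∈ ℝ³, the determinant of the 3×3 matrix with columns F₁(x), F₀₁(x), F₀₀₁(x) equals c₃c₅²c₇³, which is nonzero; consequently F₁(x), F₀₁(x), F₀₀₁(x) are linearly independent and span ℝ³, so the Lie algebra generated by {F₀,F₁} at any point x equals the whole tangent space T_xℝ³. -/

import Mathlib

noncomputable section

/-- Lie bracket of vector fields on ℝ³: `[F,G](x) = G'(x)F(x) − F'(x)G(x)`. -/
def lieBracket (F G : (Fin 3 → ℝ) → (Fin 3 → ℝ)) (x : Fin 3 → ℝ) : Fin 3 → ℝ :=
  fderiv ℝ G x (F x) - fderiv ℝ F x (G x)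

/-- Drift vector field of the electric vehicle. -/
def F0 (c1 c2 c3 c4 c5 c6 : ℝ) (x : Fin 3 → ℝ) : Fin 3 → ℝ :=
  ![c1 * x 0 + c2 * x 2, c3 * x 2, c4 + c5 * x 0 + c6 * (x 2) ^ 2]

/-- Control vector field of the electric vehicle. -/
def F1 (c7 : ℝ) (_x : Fin 3 → ℝ) : Fin 3 → ℝ := ![c7, 0, 0]

open ContinuousLinearMap in
lemma F0_hasderiv (c1 c2 c3 c4 c5 c6 : ℝ) (x : Fin 3 → ℝ) :
    HasFDerivAt (F0 c1 c2 c3 c4 c5 c6)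
      (ContinuousLinearMap.pi
        ![c1 • (proj 0 : (Fin 3 → ℝ) →L[ℝ] ℝ) + c2 • proj 2,
          c3 • (proj 2 : (Fin 3 → ℝ) →L[ℝ] ℝ),
          c5 • (proj 0 : (Fin 3 → ℝ) →L[ℝ] ℝ) + c6 • (x 2 • (proj 2 : (Fin 3 → ℝ) →L[ℝ] ℝ) + x 2 • proj 2)]) x := by
  have h : F0 c1 c2 c3 c4 c5 c6 = fun x (i : Fin 3) =>
      ![fun x : Fin 3 → ℝ => c1 * x 0 + c2 * x 2,
        fun x : Fin 3 → ℝ => c3 * x 2,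
        fun x : Fin 3 → ℝ => c4 + (c5 * x 0 + c6 * (x 2 * x 2))] i x := by
    funext x i
    fin_cases i <;> simp [F0] <;> ring
  rw [h]
  apply hasFDerivAt_pi.2
  intro i
  fin_cases i
  · exact ((hasFDerivAt_apply 0 x).const_mul c1).add ((hasFDerivAt_apply 2 x).const_mul c2)
  · exact (hasFDerivAt_apply 2 x).const_mul c3
  · have : HasFDerivAt (fun x : Fin 3 → ℝ => c5 * x 0 + c6 * (x 2 * x 2))
        (c5 • (proj 0 : (Fin 3 → ℝ) →L[ℝ] ℝ) + c6 • (x 2 • (proj 2 : (Fin 3 → ℝ) →L[ℝ] ℝ) + x 2 • proj 2)) x :=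
      ((hasFDerivAt_apply 0 x).const_mul c5).add
        (((hasFDerivAt_apply 2 x).mul (hasFDerivAt_apply 2 x)).const_mul c6)
    simpa using this.const_add c4

lemma F0_fderiv_apply (c1 c2 c3 c4 c5 c6 : ℝ) (x v : Fin 3 → ℝ) :
    fderiv ℝ (F0 c1 c2 c3 c4 c5 c6) x v =
      ![c1 * v 0 + c2 * v 2, c3 * v 2, c5 * v 0 + 2 * c6 * x 2 * v 2] := by
  rw [(F0_hasderiv c1 c2 c3 c4 c5 c6 x).fderiv]
  funext i
  fin_cases i <;>
    simp [ContinuousLinearMap.pi_apply, ContinuousLinearMap.proj_apply] <;> ring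

lemma F01_eq (c1 c2 c3 c4 c5 c6 c7 : ℝ) :
    lieBracket (F0 c1 c2 c3 c4 c5 c6) (F1 c7) =
      fun _ => ![-(c1 * c7), 0, -(c5 * c7)] := by
  funext x
  have h1 : fderiv ℝ (F1 c7) x = 0 := by
    have : F1 c7 = fun _ : Fin 3 → ℝ => ![c7, 0, 0] := rfl
    rw [this, fderiv_fun_const]; rfl
  rw [lieBracket, h1, F0_fderiv_apply]
  funext i
  fin_cases i <;> simp [F1]

lemma F001_eq (c1 c2 c3 c4 c5 c6 c7 : ℝ) (x : Fin 3 → ℝ) :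
    lieBracket (F0 c1 c2 c3 c4 c5 c6) (lieBracket (F0 c1 c2 c3 c4 c5 c6) (F1 c7)) x =
      ![c1 * (c1 * c7) + c2 * (c5 * c7), c3 * (c5 * c7),
        c5 * (c1 * c7) + 2 * c6 * x 2 * (c5 * c7)] := by
  rw [lieBracket, F01_eq, fderiv_fun_const, F0_fderiv_apply]
  funext i
  fin_cases i <;> simp <;> ring

theorem stmt1 (c1 c2 c3 c4 c5 c6 c7 : ℝ)
    (h1 : c1 < 0) (h2 : c2 < 0) (h3 : 0 < c3) (h4 : c4 < 0)
    (h5 : 0 < c5) (h6 : c6 < 0) (h7 : 0 < c7) (x : Fin 3 → ℝ) :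
    (Matrix.of fun i j =>
        (![F1 c7 x,
           lieBracket (F0 c1 c2 c3 c4 c5 c6) (F1 c7) x,
           lieBracket (F0 c1 c2 c3 c4 c5 c6) (lieBracket (F0 c1 c2 c3 c4 c5 c6) (F1 c7)) x]
          : Fin 3 → Fin 3 → ℝ) j i).det = c3 * c5 ^ 2 * c7 ^ 3 ∧
    c3 * c5 ^ 2 * c7 ^ 3 ≠ 0 ∧
    LinearIndependent ℝ
      ![F1 c7 x,
        lieBracket (F0 c1 c2 c3 c4 c5 c6) (F1 c7) x,
        lieBracket (F0 c1 c2 c3 c4 c5 c6) (lieBracket (F0 c1 c2 c3 c4 c5 c6) (F1 c7)) x] ∧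
    Submodule.span ℝ
      (Set.range
        ![F1 c7 x,
          lieBracket (F0 c1 c2 c3 c4 c5 c6) (F1 c7) x,
          lieBracket (F0 c1 c2 c3 c4 c5 c6) (lieBracket (F0 c1 c2 c3 c4 c5 c6) (F1 c7)) x]) = ⊤ := by
  have hF01 : lieBracket (F0 c1 c2 c3 c4 c5 c6) (F1 c7) x = ![-(c1 * c7), 0, -(c5 * c7)] := by
    rw [F01_eq]
  have hdet : (Matrix.of fun i j =>
        (![F1 c7 x,
           lieBracket (F0 c1 c2 c3 c4 c5 c6) (F1 c7) x,
           lieBracket (F0 c1 c2 c3 c4 c5 c6) (lieBracket (F0 c1 c2 c3 c4 c5 c6) (F1 c7)) x]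
          : Fin 3 → Fin 3 → ℝ) j i).det = c3 * c5 ^ 2 * c7 ^ 3 := by
    rw [Matrix.det_fin_three]
    simp [hF01, F001_eq, F1]
    ring
  have hne : c3 * c5 ^ 2 * c7 ^ 3 ≠ 0 := by positivity
  have hli : LinearIndependent ℝ
      ![F1 c7 x,
        lieBracket (F0 c1 c2 c3 c4 c5 c6) (F1 c7) x,
        lieBracket (F0 c1 c2 c3 c4 c5 c6) (lieBracket (F0 c1 c2 c3 c4 c5 c6) (F1 c7)) x] := by
    have := Matrix.linearIndependent_cols_iff_isUnit (K := ℝ)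
      (A := Matrix.of fun i j =>
        (![F1 c7 x,
           lieBracket (F0 c1 c2 c3 c4 c5 c6) (F1 c7) x,
           lieBracket (F0 c1 c2 c3 c4 c5 c6) (lieBracket (F0 c1 c2 c3 c4 c5 c6) (F1 c7)) x]
          : Fin 3 → Fin 3 → ℝ) j i)
    have hU : IsUnit (Matrix.of fun i j =>
        (![F1 c7 x,
           lieBracket (F0 c1 c2 c3 c4 c5 c6) (F1 c7) x,
           lieBracket (F0 c1 c2 c3 c4 c5 c6) (lieBracket (F0 c1 c2 c3 c4 c5 c6) (F1 c7)) x]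
          : Fin 3 → Fin 3 → ℝ) j i) := by
      rw [Matrix.isUnit_iff_isUnit_det, hdet]
      exact isUnit_iff_ne_zero.2 hne
    exact this.2 hU
  exact ⟨hdet, hne, hli, hli.span_eq_top_of_card_eq_finrank (by simp)⟩
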